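/- (Gap estimate via nonconvexity measure.) Let K ⊆ E (a Hilbert space) and let F be differentiable on a neighborhood of conv(K) with L̃-Lipschitz gradient on conv(K). Then inf_{y∈K} F(y) ≤ inf_{y∈conv(K)} F(y) + (L̃/2)ρ(K)², where ρ(K)² = sup_{y ∈ conv(K)} inf { σ²_μ[Id] : μ finitely supported probability on K with E_μ[Id] = y }. -/

import Mathlib

/-- A finitely supported probability measure, encoded as a `Finsupp` of weights. -/
def IsFinProb {Ω : Type*} (μ : Ω →₀ ℝ) : Prop :=
  (∀ x, 0 ≤ μ x) ∧ μ.sum (fun _ w => w) = 1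

/-- Expectation of `F` under a finitely supported measure `μ`. -/
noncomputable def expFS {Ω E : Type*} [AddCommMonoid E] [Module ℝ E]
    (μ : Ω →₀ ℝ) (F : Ω → E) : E :=
  μ.sum fun x w => w • F x

/-- Variance of `F` under a finitely supported measure `μ`. -/
noncomputable def varFS {Ω E : Type*} [NormedAddCommGroup E] [NormedSpace ℝ E]
    (μ : Ω →₀ ℝ) (F : Ω → E) : ℝ :=
  μ.sum fun x w => w * ‖F x - expFS μ F‖ ^ 2

open InnerProductSpace in
lemma descent_lemma
    {E : Type*} [NormedAddCommGroup E] [InnerProductSpace ℝ E] [CompleteSpace E]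
    {s : Set E} (hs : Convex ℝ s) {F : E → ℝ} {DF : E → E} {L : NNReal}
    (hdiff : ∀ y ∈ s, HasGradientAt F (DF y) y)
    (hlip : LipschitzOnWith L DF s)
    {x y : E} (hx : x ∈ s) (hy : y ∈ s) :
    F x ≤ F y + inner ℝ (DF y) (x - y) + (L : ℝ) / 2 * ‖x - y‖ ^ 2 := by
  set v := x - y with hv
  have hmem : ∀ t ∈ Set.Icc (0:ℝ) 1, y + t • v ∈ s := by
    intro t ht
    have := hs.add_smul_sub_mem hy hx ht
    simpa [hv] using this
  set h : ℝ → ℝ := fun t => F (y + t • v) - t * inner ℝ (DF y) v - (L : ℝ) * ‖v‖ ^ 2 / 2 * t ^ 2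
  have hderiv : ∀ t ∈ Set.Icc (0:ℝ) 1, HasDerivAt h
      (inner ℝ (DF (y + t • v)) v - inner ℝ (DF y) v - (L : ℝ) * ‖v‖ ^ 2 * t) t := by
    intro t ht
    have hpath : HasDerivAt (fun t : ℝ => y + t • v) v t := by
      simpa using ((hasDerivAt_id t).smul_const v).const_add y
    have hF : HasDerivAt (fun t : ℝ => F (y + t • v)) (inner ℝ (DF (y + t • v)) v) t := by
      have := ((hdiff _ (hmem t ht)).hasFDerivAt.comp_hasDerivAt t hpath)
      simp at this
      exact this
    have h2 : HasDerivAt (fun t : ℝ => t * inner ℝ (DF y) v) (inner ℝ (DF y) v) t := by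
      simpa using (hasDerivAt_id t).mul_const (inner ℝ (DF y) v : ℝ)
    have h3 : HasDerivAt (fun t : ℝ => (L : ℝ) * ‖v‖ ^ 2 / 2 * t ^ 2)
        ((L : ℝ) * ‖v‖ ^ 2 * t) t := by
      have := (hasDerivAt_pow 2 t).const_mul ((L : ℝ) * ‖v‖ ^ 2 / 2)
      refine this.congr_deriv ?_
      norm_num
      ring
    exact (hF.sub h2).sub h3
  have hanti : AntitoneOn h (Set.Icc (0:ℝ) 1) := by
    apply antitoneOn_of_deriv_nonpos (convex_Icc 0 1)
    · exact fun t ht => ((hderiv t ht).continuousAt).continuousWithinAt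
    · intro t ht
      rw [interior_Icc] at ht
      exact ((hderiv t (Set.mem_Icc_of_Ioo ht)).differentiableAt).differentiableWithinAt
    · intro t ht
      rw [interior_Icc] at ht
      rw [(hderiv t (Set.mem_Icc_of_Ioo ht)).deriv]
      have hlipb : ‖DF (y + t • v) - DF y‖ ≤ (L : ℝ) * (t * ‖v‖) := by
        have := hlip.norm_sub_le (hmem t (Set.mem_Icc_of_Ioo ht)) hy
        calc ‖DF (y + t • v) - DF y‖ ≤ (L : ℝ) * ‖(y + t • v) - y‖ := this
          _ = (L : ℝ) * (t * ‖v‖) := by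
              rw [add_sub_cancel_left, norm_smul, Real.norm_eq_abs, abs_of_pos ht.1]
      have hcs : inner ℝ (DF (y + t • v)) v - inner ℝ (DF y) v ≤ (L : ℝ) * ‖v‖ ^ 2 * t := by
        calc inner ℝ (DF (y + t • v)) v - inner ℝ (DF y) v
            = inner ℝ (DF (y + t • v) - DF y) v := by rw [inner_sub_left]
          _ ≤ ‖DF (y + t • v) - DF y‖ * ‖v‖ := real_inner_le_norm _ _
          _ ≤ (L : ℝ) * (t * ‖v‖) * ‖v‖ := by
              apply mul_le_mul_of_nonneg_right hlipb (norm_nonneg v)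
          _ = (L : ℝ) * ‖v‖ ^ 2 * t := by ring
      linarith
  have := hanti (Set.left_mem_Icc.2 zero_le_one) (Set.right_mem_Icc.2 zero_le_one) zero_le_one
  simp only [h, zero_smul, add_zero, zero_mul, sub_zero, one_smul, one_mul,
    one_pow, mul_one] at this
  have hx1 : y + v = x := by rw [hv]; abel
  rw [hx1] at this
  linarith

/-- gap estimate via the nonconvexity measure. If `R ≥ ρ(K)²`,
in the sense that every point of `conv(K)` is the barycenter of finitely
supported probabilities on `K` of variance arbitrarily close to at most `R`,
and `F` has an `L̃`-Lipschitz gradient on `conv(K)`, then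
`inf_K F ≤ inf_{conv(K)} F + (L̃/2) R`. -/
theorem gap_estimate_nonconvexity_measure
    {E : Type*} [NormedAddCommGroup E] [InnerProductSpace ℝ E] [CompleteSpace E]
    (K : Set E) (hK : K.Nonempty)
    (F : E → ℝ) (DF : E → E) (Lt : NNReal)
    (hdiff : ∀ y ∈ convexHull ℝ K, HasGradientAt F (DF y) y)
    (hgradLip : LipschitzOnWith Lt DF (convexHull ℝ K))
    (R : ℝ)
    (hR : ∀ y ∈ convexHull ℝ K, ∀ ε > 0, ∃ μ : E →₀ ℝ,
      IsFinProb μ ∧ ↑μ.support ⊆ K ∧ expFS μ id = y ∧ varFS μ id ≤ R + ε) :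
    sInf (F '' K) ≤ sInf (F '' convexHull ℝ K) + (Lt : ℝ) / 2 * R := by
  have hKsub : K ⊆ convexHull ℝ K := subset_convexHull ℝ K
  obtain ⟨x₀, hx₀⟩ := hK
  have hx₀c : x₀ ∈ convexHull ℝ K := hKsub hx₀
  -- R is nonnegative
  have hR0 : (0:ℝ) ≤ R := by
    apply le_of_forall_pos_le_add
    intro ε hε
    obtain ⟨μ, hprob, hsupp, hbary, hvar⟩ := hR x₀ hx₀c ε hε
    refine le_trans ?_ hvar
    apply Finset.sum_nonneg
    intro x _
    exact mul_nonneg (hprob.1 x) (sq_nonneg _)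
  -- key estimate for each y in the hull
  by_cases hbdd : BddBelow (F '' K)
  case neg =>
    have hbdd2 : ¬ BddBelow (F '' convexHull ℝ K) := fun h => hbdd (h.mono (Set.image_mono hKsub))
    rw [Real.sInf_of_not_bddBelow hbdd, Real.sInf_of_not_bddBelow hbdd2, zero_add]
    positivity
  have key : ∀ y ∈ convexHull ℝ K, sInf (F '' K) ≤ F y + (Lt : ℝ) / 2 * R := by
    intro y hy
    · apply le_of_forall_pos_le_add
      intro δ hδ
      set ε : ℝ := δ / ((Lt : ℝ) / 2 + 1) with hεdef
      have hL2 : (0:ℝ) ≤ (Lt : ℝ) / 2 := by positivity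
      have hε : 0 < ε := by positivity
      obtain ⟨μ, hprob, hsupp, hbary, hvar⟩ := hR y hy ε hε
      have hsum1 : ∑ x ∈ μ.support, μ x = 1 := hprob.2
      have hbary' : ∑ x ∈ μ.support, μ x • x = y := by
        simpa [expFS, Finsupp.sum] using hbary
      have hzero : ∑ x ∈ μ.support, μ x • (x - y) = (0:E) := by
        simp only [smul_sub, Finset.sum_sub_distrib, hbary', ← Finset.sum_smul, hsum1, one_smul,
          sub_self]
      set S : ℝ := ∑ x ∈ μ.support, μ x * F x with hS
      -- S is at most F y + L/2 (R+ε)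
      have claim1 : S ≤ F y + (Lt : ℝ) / 2 * (R + ε) := by
        have step : S ≤ ∑ x ∈ μ.support, μ x *
            (F y + inner ℝ (DF y) (x - y) + (Lt : ℝ) / 2 * ‖x - y‖ ^ 2) := by
          apply Finset.sum_le_sum
          intro x hx
          exact mul_le_mul_of_nonneg_left
            (descent_lemma (convex_convexHull ℝ K) hdiff hgradLip (hKsub (hsupp hx)) hy)
            (hprob.1 x)
        have expand : ∑ x ∈ μ.support, μ x *
            (F y + inner ℝ (DF y) (x - y) + (Lt : ℝ) / 2 * ‖x - y‖ ^ 2)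
            = F y + inner ℝ (DF y) (∑ x ∈ μ.support, μ x • (x - y))
              + (Lt : ℝ) / 2 * ∑ x ∈ μ.support, μ x * ‖x - y‖ ^ 2 := by
          rw [inner_sum, Finset.mul_sum]
          simp only [real_inner_smul_right, mul_add]
          rw [Finset.sum_add_distrib, Finset.sum_add_distrib, ← Finset.sum_mul, hsum1, one_mul]
          congr 1
          exact Finset.sum_congr rfl fun x _ => by ring
        have hvar' : ∑ x ∈ μ.support, μ x * ‖x - y‖ ^ 2 ≤ R + ε := by
          have : varFS μ id = ∑ x ∈ μ.support, μ x * ‖x - y‖ ^ 2 := by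
            simp [varFS, Finsupp.sum, hbary]
          linarith [hvar, this ▸ hvar]
        rw [expand, hzero, inner_zero_right] at step
        have := mul_le_mul_of_nonneg_left hvar' hL2
        linarith
      -- some point of the support does at least as well as the average
      have hsuppne : μ.support.Nonempty := by
        rw [Finset.nonempty_iff_ne_empty]
        intro h
        rw [h] at hsum1
        simp at hsum1
      have claim2 : ∃ x ∈ μ.support, F x ≤ S := by
        by_contra hcon
        push_neg at hcon
        have : ∑ x ∈ μ.support, μ x * S < ∑ x ∈ μ.support, μ x * F x := by
          apply Finset.sum_lt_sum_of_nonempty hsuppne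
          intro x hx
          have hpos : 0 < μ x := lt_of_le_of_ne (hprob.1 x) (Ne.symm (Finsupp.mem_support_iff.1 hx))
          exact mul_lt_mul_of_pos_left (hcon x hx) hpos
        rw [← Finset.sum_mul, hsum1, one_mul] at this
        exact lt_irrefl S this
      obtain ⟨x, hx, hFx⟩ := claim2
      have h1 : sInf (F '' K) ≤ F x := csInf_le hbdd ⟨x, hsupp hx, rfl⟩
      have hεbound : (Lt : ℝ) / 2 * ε ≤ δ := by
        rw [hεdef]
        rw [div_eq_mul_inv δ, mul_comm δ]
        rw [← mul_assoc]
        have : ((Lt : ℝ) / 2) * ((Lt : ℝ) / 2 + 1)⁻¹ ≤ 1 := by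
          rw [mul_inv_le_iff₀ (by positivity)]
          linarith
        nlinarith [hδ.le]
      have : (Lt : ℝ) / 2 * (R + ε) ≤ (Lt : ℝ) / 2 * R + δ := by
        rw [mul_add]; linarith
      linarith
  have hne : (F '' convexHull ℝ K).Nonempty := ⟨F x₀, x₀, hx₀c, rfl⟩
  have hfin : sInf (F '' K) - (Lt : ℝ) / 2 * R ≤ sInf (F '' convexHull ℝ K) := by
    apply le_csInf hne
    rintro b ⟨y, hy, rfl⟩
    linarith [key y hy]
  linarith
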